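/- Let V be a finite-dimensional real inner product space and K : V × V → V a symmetric bilinear map with g(K(X,Y),Z) totally symmetric, [K,K] = 0, and K non-degenerate. Then (V, ∘, g) with X ∘ Y := K(X,Y) is a semisimple Frobenius algebra: the product is commutative, associative, has a unit, satisfies g(X∘Y, Z) = g(X, Y∘Z), and V is isomorphic as an algebra to ℝ^n with component-wise multiplication. -/

import Mathlib

open scoped RealInnerProductSpace

/-- a statistical vector space with totally symmetric `K`,
`[K,K] = 0` and non-degenerate `K` is a semisimple Frobenius algebra:
the product `X ∘ Y := K(X,Y)` is commutative, associative, unital, satisfies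
`g(X∘Y,Z) = g(X,Y∘Z)`, and `(V,∘)` is isomorphic to `ℝ^n` with componentwise
multiplication. -/
theorem stmt_9 {V : Type*} [NormedAddCommGroup V] [InnerProductSpace ℝ V]
    [FiniteDimensional ℝ V] (K : V →ₗ[ℝ] V →ₗ[ℝ] V)
    (hKcomm : ∀ X Y : V, K X Y = K Y X)
    (hCsym : ∀ X Y Z : V, ⟪K X Y, Z⟫ = ⟪K X Z, Y⟫)
    (hKK : ∀ X Y Z : V, K X (K Y Z) = K Y (K X Z))
    (hnd : Function.Injective fun X : V => K X) :
    (∀ X Y : V, K X Y = K Y X) ∧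
    (∀ X Y Z : V, K (K X Y) Z = K X (K Y Z)) ∧
    (∃ e : V, ∀ X : V, K e X = X ∧ K X e = X) ∧
    (∀ X Y Z : V, ⟪K X Y, Z⟫ = ⟪X, K Y Z⟫) ∧
    (∃ φ : V ≃ₗ[ℝ] (Fin (Module.finrank ℝ V) → ℝ),
      ∀ X Y : V, φ (K X Y) = φ X * φ Y) := by
  classical
  -- symmetry of each operator
  have hsym : ∀ X : V, (K X).IsSymmetric := fun X x y =>
    (hCsym X x y).trans (real_inner_comm _ _)
  have hcommute : ∀ X Y : V, Commute (K X) (K Y) := by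
    intro X Y
    ext z
    exact hKK X Y z
  -- joint eigenspaces
  set E : (V → ℝ) → Submodule ℝ V :=
    fun χ => ⨅ X : V, Module.End.eigenspace (K X) (χ X) with hE
  have memE : ∀ (χ : V → ℝ) (x : V), x ∈ E χ ↔ ∀ X : V, K X x = χ X • x := by
    intro χ x
    simp only [hE, Submodule.mem_iInf, Module.End.mem_eigenspace_iff]
  have htop : (⨆ χ : V → ℝ, E χ) = ⊤ :=
    LinearMap.IsSymmetric.iSup_iInf_eq_top_of_commute hsym
      (fun X Y _ => hcommute X Y)
  -- products of eigenvectors from different joint eigenspaces vanish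
  have prodzero : ∀ (χ ψ : V → ℝ) (x y : V), x ∈ E χ → y ∈ E ψ → χ ≠ ψ →
      K x y = 0 := by
    intro χ ψ x y hx hy hne
    obtain ⟨a, ha⟩ := Function.ne_iff.mp hne
    have h1 : K a (K x y) = ψ a • K x y := by
      rw [hKK a x y, (memE ψ y).mp hy a, map_smul]
    have h2 : K a (K x y) = χ a • K x y := by
      rw [hKcomm x y, hKK a y x, (memE χ x).mp hx a, map_smul, hKcomm y x]
    have h3 : (χ a - ψ a) • K x y = 0 := by
      rw [sub_smul, ← h2, ← h1, sub_self]
    exact (smul_eq_zero.mp h3).resolve_left (sub_ne_zero.mpr ha) |>.symm ▸ rfl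
  -- a nonzero joint eigenvector has nonzero eigenvalue at itself
  have key : ∀ (χ : V → ℝ) (x : V), x ∈ E χ → x ≠ 0 → χ x ≠ 0 := by
    intro χ x hx hx0 hχx
    apply hx0
    apply hnd
    show K x = K 0
    rw [map_zero]
    ext Z
    show K x Z = 0
    rw [← LinearMap.mem_ker]
    have hle : (⊤ : Submodule ℝ V) ≤ LinearMap.ker (K x) := by
      rw [← htop]
      apply iSup_le
      intro ψ Z hZ
      rw [LinearMap.mem_ker]
      by_cases hψ : ψ = χ
      · subst hψ
        rw [(memE ψ Z).mp hZ x, hχx, zero_smul]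
      · exact prodzero χ ψ x Z hx hZ (fun h => hψ h.symm)
    exact hle Submodule.mem_top
  -- index type: nonzero joint eigenspaces
  set ι := {χ : V → ℝ // E χ ≠ ⊥} with hι
  -- choose a nonzero vector in each
  have hpick : ∀ i : ι, ∃ x : V, x ∈ E i.1 ∧ x ≠ 0 := by
    intro i
    obtain ⟨x, hx, hx0⟩ := Submodule.exists_mem_ne_zero_of_ne_bot i.2
    exact ⟨x, hx, hx0⟩
  choose x hxmem hxne using hpick
  -- the idempotents
  set f : ι → V := fun i => (i.1 (x i))⁻¹ • x i with hf
  have hχne : ∀ i : ι, i.1 (x i) ≠ 0 := fun i => key i.1 (x i) (hxmem i) (hxne i)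
  have hfmem : ∀ i : ι, f i ∈ E i.1 := fun i => Submodule.smul_mem _ _ (hxmem i)
  have hfne : ∀ i : ι, f i ≠ 0 := by
    intro i
    simp only [hf, ne_eq, smul_eq_zero, inv_eq_zero, not_or]
    exact ⟨hχne i, hxne i⟩
  have hidem : ∀ i : ι, K (f i) (f i) = f i := by
    intro i
    simp only [hf, map_smul, LinearMap.smul_apply]
    rw [(memE i.1 (x i)).mp (hxmem i) (x i)]
    rw [smul_smul, smul_smul]
    field_simp
  have hprod : ∀ i j : ι, i ≠ j → K (f i) (f j) = 0 := by
    intro i j hij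
    exact prodzero i.1 j.1 (f i) (f j) (hfmem i) (hfmem j)
      (fun h => hij (Subtype.ext h))
  -- orthogonality
  have horth : Pairwise fun i j : ι => ⟪f i, f j⟫ = 0 := by
    intro i j hij
    obtain ⟨a, ha⟩ : ∃ a, i.1 a ≠ j.1 a :=
      Function.ne_iff.mp (fun h => hij (Subtype.ext h))
    have h1 : ⟪K a (f i), f j⟫ = i.1 a * ⟪f i, f j⟫ := by
      rw [(memE i.1 (f i)).mp (hfmem i) a, real_inner_smul_left]
    have h2 : ⟪K a (f i), f j⟫ = j.1 a * ⟪f i, f j⟫ := by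
      rw [hsym a (f i) (f j), (memE j.1 (f j)).mp (hfmem j) a,
        real_inner_smul_right]
    have := h1.symm.trans h2
    by_contra hne
    exact ha (mul_right_cancel₀ hne this)
  have hindep : LinearIndependent ℝ f :=
    linearIndependent_of_ne_zero_of_inner_eq_zero hfne horth
  -- spanning
  have hspan : Submodule.span ℝ (Set.range f) = ⊤ := by
    rw [← top_le_iff, ← htop]
    apply iSup_le
    intro χ
    by_cases hχ : E χ = ⊥
    · rw [hχ]; exact bot_le
    · set i : ι := ⟨χ, hχ⟩ with hidef
      intro y hy
      have h1 : K (x i) y = χ (x i) • y := (memE χ y).mp hy (x i)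
      have h2 : K (x i) y = χ y • x i := by
        rw [hKcomm, (memE χ (x i)).mp (hxmem i) y]
      have : y = (χ (x i))⁻¹ • (χ y • x i) := by
        rw [← h2, h1, smul_smul, inv_mul_cancel₀ (hχne i), one_smul]
      rw [this]
      apply Submodule.smul_mem
      apply Submodule.smul_mem
      have : x i = (χ (x i)) • f i := by
        rw [hf, smul_smul, mul_inv_cancel₀ (hχne i), one_smul]
      rw [this]
      exact Submodule.smul_mem _ _ (Submodule.subset_span ⟨i, rfl⟩)
  have : Finite ι := hindep.finite
  have : Fintype ι := Fintype.ofFinite ι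
  -- the basis of idempotents
  set b : Module.Basis ι ℝ V := Module.Basis.mk hindep (le_of_eq hspan.symm) with hb
  have hbapp : ∀ i : ι, b i = f i := fun i => Module.Basis.mk_apply hindep _ i
  have hcard : Module.finrank ℝ V = Fintype.card ι :=
    Module.finrank_eq_card_basis b
  set σ : ι ≃ Fin (Module.finrank ℝ V) :=
    Fintype.equivFinOfCardEq hcard.symm with hσ
  set b' : Module.Basis (Fin (Module.finrank ℝ V)) ℝ V := b.reindex σ with hb'
  have hb'app : ∀ j, b' j = f (σ.symm j) := by
    intro j
    rw [hb', Module.Basis.reindex_apply, hbapp]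
  set φ := b'.equivFun with hφ
  -- multiplicativity
  have hmul : ∀ X Y : V, φ (K X Y) = φ X * φ Y := by
    have hbil : ∀ i j, φ (K (b' i) (b' j)) = φ (b' i) * φ (b' j) := by
      intro i j
      by_cases hij : i = j
      · subst hij
        have h1 : K (b' i) (b' i) = b' i := by
          rw [hb'app]; exact hidem _
        rw [h1]
        funext k
        simp only [Pi.mul_apply, hφ, Module.Basis.equivFun_self]
        by_cases hik : i = k <;> simp [hik]
      · have h0 : K (b' i) (b' j) = 0 := by
          rw [hb'app, hb'app]
          exact hprod _ _ (fun h => hij (σ.symm.injective h))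
        rw [h0, map_zero]
        funext k
        simp only [Pi.mul_apply, hφ, Module.Basis.equivFun_self, Pi.zero_apply]
        rcases eq_or_ne i k with rfl | hik
        · rw [if_pos rfl, if_neg (fun h => hij h.symm), mul_zero]
        · rw [if_neg hik, zero_mul]
    intro X Y
    set Φ : V →ₗ[ℝ] (Fin (Module.finrank ℝ V) → ℝ) := φ.toLinearMap with hΦ
    have hΦapp : ∀ v, Φ v = φ v := fun v => rfl
    set B1 : V →ₗ[ℝ] V →ₗ[ℝ] (Fin (Module.finrank ℝ V) → ℝ) :=
      K.compr₂ Φ with hB1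
    set B2 : V →ₗ[ℝ] V →ₗ[ℝ] (Fin (Module.finrank ℝ V) → ℝ) :=
      ((LinearMap.mul ℝ _).comp Φ).compl₂ Φ with hB2
    have heq : B1 = B2 := by
      apply LinearMap.ext_basis b' b'
      intro i j
      simp only [hB1, hB2, LinearMap.compr₂_apply, LinearMap.compl₂_apply,
        LinearMap.comp_apply, LinearMap.mul_apply', hΦapp]
      exact hbil i j
    have := LinearMap.congr_fun (LinearMap.congr_fun heq X) Y
    simpa only [hB1, hB2, LinearMap.compr₂_apply, LinearMap.compl₂_apply,
      LinearMap.comp_apply, LinearMap.mul_apply', hΦapp] using this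
  refine ⟨hKcomm, ?_, ?_, ?_, ⟨φ, hmul⟩⟩
  · intro X Y Z
    rw [hKcomm (K X Y) Z, hKK Z X Y, hKcomm Z Y]
  · refine ⟨φ.symm 1, fun X => ?_⟩
    have h1 : K (φ.symm 1) X = X := by
      apply φ.injective
      rw [hmul, LinearEquiv.apply_symm_apply, one_mul]
    exact ⟨h1, by rw [hKcomm]; exact h1⟩
  · intro X Y Z
    rw [hKcomm X Y, hCsym Y X Z, real_inner_comm]
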